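/- Let C be a nonempty finite set and v a symmetric valuation on C. Then there exists a matching μ of C such that (1/|C|)·Σ_{{i,j}⊆C, i≠j} v i j ≤ SW(μ), where the sum ranges over all unordered pairs of distinct elements of C. (Equivalently, the 'uniform fractional matching' that puts weight 1/|C| on every pair is dominated by some matching; in particular, a maximum weight matching of C has weight at least half of SW(C).) -/

import Mathlib

open Finset

/-- Social welfare of a coalition `C`: `SW(C) = (Σ_{i∈C} Σ_{j∈C, j≠i} v i j) / |C|`. -/
noncomputable def coalSW {α : Type*} [DecidableEq α] (v : α → α → ℝ) (C : Finset α) : ℝ :=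
  (∑ i ∈ C, ∑ j ∈ C.erase i, v i j) / (C.card : ℝ)

/-- Social welfare of a partition: the sum of the social welfares of its parts. -/
noncomputable def partSW {α : Type*} [DecidableEq α] (v : α → α → ℝ) {N : Finset α}
    (π : Finpartition N) : ℝ :=
  ∑ C ∈ π.parts, coalSW v C

/-- A matching is a partition all of whose parts have at most 2 elements.
For a symmetric valuation with zero diagonal, the social welfare of a matching
(as a partition) equals the sum of `v i j` over its two-element parts `{i, j}`. -/
def IsMatching {α : Type*} [DecidableEq α] {N : Finset α} (π : Finpartition N) : Prop :=
  ∀ p ∈ π.parts, p.card ≤ 2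

lemma sum_offDiag_eq {α : Type*} [DecidableEq α] (s : Finset α) (f : α → α → ℝ) :
    ∑ p ∈ s.offDiag, f p.1 p.2 = ∑ i ∈ s, ∑ j ∈ s.erase i, f i j := by
  have hoff : s.offDiag = (s ×ˢ s).filter (fun a => a.1 ≠ a.2) := by
    ext x; simp [Finset.mem_offDiag, and_assoc]
  rw [hoff, Finset.sum_filter, Finset.sum_product]
  refine Finset.sum_congr rfl fun i hi => ?_
  rw [← Finset.sum_filter, Finset.filter_ne]

lemma coalSW_singleton {α : Type*} [DecidableEq α] (v : α → α → ℝ) (a : α) :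
    coalSW v {a} = 0 := by
  simp [coalSW]

lemma coalSW_pair {α : Type*} [DecidableEq α] (v : α → α → ℝ)
    (hsymm : ∀ i j, v i j = v j i) {i j : α} (h : i ≠ j) :
    coalSW v {i, j} = v i j := by
  have : ({i, j} : Finset α).card = 2 := Finset.card_pair h
  rw [coalSW, this]
  have h1 : ({i, j} : Finset α).erase i = {j} := by
    ext x; simp; aesop
  have h2 : ({i, j} : Finset α).erase j = {i} := by
    ext x; simp; aesop
  rw [Finset.sum_pair h, h1, h2]
  simp only [Finset.sum_singleton, hsymm j i]
  ring

lemma key {α : Type*} [DecidableEq α] (v : α → α → ℝ)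
    (hsymm : ∀ i j, v i j = v j i) (hdiag : ∀ i, v i i = 0) :
    ∀ n : ℕ, ∀ C : Finset α, C.card = n →
      ∃ μ : Finpartition C, IsMatching μ ∧
        (∑ i ∈ C, ∑ j ∈ C, v i j) / (2 * n) ≤ partSW v μ := by
  intro n
  induction n using Nat.strong_induction_on with
  | _ n ih =>
  intro C hcard
  match n, hcard with
  | 0, hcard =>
    rw [Finset.card_eq_zero] at hcard
    subst hcard
    refine ⟨(Finpartition.empty (Finset α)).copy Finset.bot_eq_empty, ?_, ?_⟩
    · intro p hp; simp [Finpartition.empty] at hp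
    · simp [partSW, Finpartition.empty]
  | 1, hcard =>
    rw [Finset.card_eq_one] at hcard
    obtain ⟨a, rfl⟩ := hcard
    refine ⟨Finpartition.indiscrete (by simp), ?_, ?_⟩
    · intro p hp; simp [Finpartition.indiscrete] at hp; simp [hp]
    · simp [partSW, Finpartition.indiscrete, coalSW_singleton, hdiag]
  | 2, hcard =>
    rw [Finset.card_eq_two] at hcard
    obtain ⟨i, j, hij, rfl⟩ := hcard
    by_cases hv : 0 ≤ v i j
    · refine ⟨Finpartition.indiscrete (by simp), ?_, ?_⟩
      · intro p hp; simp [Finpartition.indiscrete] at hp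
        rw [hp]; exact le_of_eq (Finset.card_pair hij)
      · have : partSW v (Finpartition.indiscrete (show ({i,j} : Finset α) ≠ ⊥ by simp)) = v i j := by
          simp [partSW, Finpartition.indiscrete, coalSW_pair v hsymm hij]
        rw [this, Finset.sum_pair hij, Finset.sum_pair hij, Finset.sum_pair hij,
          hdiag, hdiag, hsymm j i]
        push_cast
        linarith
    · -- two singletons
      have hji : j ≠ i := hij.symm
      have hsup : ({i} : Finset α) ⊔ {j} = {i, j} := by
        ext x; simp
      refine ⟨(Finpartition.indiscrete (show ({i} : Finset α) ≠ ⊥ by simp)).extend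
        (show ({j} : Finset α) ≠ ⊥ by simp) (by rw [Finset.disjoint_singleton]; exact hij) hsup, ?_, ?_⟩
      · intro p hp
        simp [Finpartition.extend, Finpartition.indiscrete] at hp
        rcases hp with rfl | rfl <;> simp
      · have hne : ({j} : Finset α) ∉ ({{i}} : Finset (Finset α)) := by simp [hji]
        rw [partSW, Finpartition.extend_parts]
        simp only [Finpartition.indiscrete]
        rw [Finset.sum_insert hne]
        simp only [Finset.sum_singleton, coalSW_singleton]
        rw [Finset.sum_pair hij, Finset.sum_pair hij, Finset.sum_pair hij,
          hdiag, hdiag, hsymm j i]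
        push_cast
        linarith
  | (m + 3), hcard =>
    -- abbreviations
    have hNpos : (0:ℝ) < ((m+3:ℕ):ℝ) := by positivity
    -- total sum of the selector expression over offDiag
    have hgsum : ∑ p ∈ C.offDiag,
        ((((m+3:ℕ):ℝ)-1) * v p.1 p.2 - (∑ k ∈ C, v p.1 k) - (∑ k ∈ C, v p.2 k))
        = (∑ a ∈ C, ∑ b ∈ C, v a b) - ((m+3:ℕ):ℝ) * (∑ a ∈ C, ∑ b ∈ C, v a b) := by
      rw [sum_offDiag_eq C
        (fun a b => ((((m+3:ℕ):ℝ))-1) * v a b - (∑ k ∈ C, v a k) - (∑ k ∈ C, v b k))]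
      have hper : ∀ i ∈ C, ∑ j ∈ C.erase i,
          (((((m+3:ℕ):ℝ))-1) * v i j - (∑ k ∈ C, v i k) - (∑ k ∈ C, v j k))
          = (∑ k ∈ C, v i k) - (∑ a ∈ C, ∑ b ∈ C, v a b) := by
        intro i hi
        have hce : (C.erase i).card = m + 2 := by
          rw [Finset.card_erase_of_mem hi, hcard]; omega

        have h1 : ∑ j ∈ C.erase i, v i j = ∑ k ∈ C, v i k := by
          rw [Finset.sum_erase_eq_sub hi, hdiag i, sub_zero]
        have h2 : ∑ j ∈ C.erase i, (∑ k ∈ C, v j k)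
            = (∑ a ∈ C, ∑ b ∈ C, v a b) - (∑ k ∈ C, v i k) :=
          Finset.sum_erase_eq_sub hi
        rw [Finset.sum_sub_distrib, Finset.sum_sub_distrib, ← Finset.mul_sum, h1,
          Finset.sum_const, hce, h2, nsmul_eq_mul]
        push_cast
        ring
      rw [Finset.sum_congr rfl hper, Finset.sum_sub_distrib, Finset.sum_const, hcard,
        nsmul_eq_mul]
    -- there exists a pair at least as good as average
    have hod_ne : C.offDiag.Nonempty := by
      obtain ⟨a, ha, b, hb, hab⟩ := Finset.one_lt_card.mp (show 1 < C.card by omega)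
      exact ⟨(a, b), Finset.mem_offDiag.2 ⟨ha, hb, hab⟩⟩
    have hconst : ∑ _p ∈ C.offDiag, (-((∑ a ∈ C, ∑ b ∈ C, v a b) / ((m+3:ℕ):ℝ)))
        = (∑ a ∈ C, ∑ b ∈ C, v a b) - ((m+3:ℕ):ℝ) * (∑ a ∈ C, ∑ b ∈ C, v a b) := by
      rw [Finset.sum_const, Finset.offDiag_card, hcard, nsmul_eq_mul]
      have h1 : (((m+3) * (m+3) - (m+3) : ℕ) : ℝ)
          = ((m+3:ℕ):ℝ) * ((m+3:ℕ):ℝ) - ((m+3:ℕ):ℝ) := by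
        push_cast [Nat.cast_sub (by nlinarith : (m+3) ≤ (m+3)*(m+3))]
        ring
      rw [h1]
      field_simp
      ring
    obtain ⟨p, hpmem, hple⟩ := Finset.exists_le_of_sum_le hod_ne
      (le_of_eq (hconst.trans hgsum.symm))
    obtain ⟨i, j⟩ := p
    rw [Finset.mem_offDiag] at hpmem
    obtain ⟨hiC, hjC, hij⟩ := hpmem
    simp only at hple
    -- remove i and j
    have hjCi : j ∈ C.erase i := Finset.mem_erase.2 ⟨hij.symm, hjC⟩
    set C' := (C.erase i).erase j with hC'
    have hiC' : i ∉ C' := fun h => (Finset.notMem_erase i C) (Finset.mem_of_mem_erase h)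
    have hjC' : j ∉ C' := Finset.notMem_erase j _
    have hins : insert j C' = C.erase i := Finset.insert_erase hjCi
    have hCeq : C = insert i (insert j C') := by
      rw [hins, Finset.insert_erase hiC]
    have hC'card : C'.card = m + 1 := by
      rw [hC', Finset.card_erase_of_mem hjCi, Finset.card_erase_of_mem hiC, hcard]
      omega
    have hiIns : i ∉ insert j C' := by
      rw [hins]; exact Finset.notMem_erase i C
    have hsplit : ∀ f : α → ℝ, ∑ a ∈ C, f a = f i + f j + ∑ a ∈ C', f a := by
      intro f
      rw [hCeq, Finset.sum_insert hiIns, Finset.sum_insert hjC']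
      ring
    -- decomposition of the total sum
    have hDi : ∑ k ∈ C, v i k = v i j + ∑ b ∈ C', v i b := by
      rw [hsplit (v i), hdiag i]; ring
    have hDj : ∑ k ∈ C, v j k = v i j + ∑ b ∈ C', v j b := by
      rw [hsplit (v j), hdiag j, hsymm j i]; ring
    have hcol1 : ∑ a ∈ C', v a i = ∑ b ∈ C', v i b :=
      Finset.sum_congr rfl fun a _ => hsymm a i
    have hcol2 : ∑ a ∈ C', v a j = ∑ b ∈ C', v j b :=
      Finset.sum_congr rfl fun a _ => hsymm a j
    have hTdec : (∑ a ∈ C, ∑ b ∈ C, v a b)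
        = (∑ a ∈ C', ∑ b ∈ C', v a b) + 2 * (∑ k ∈ C, v i k) + 2 * (∑ k ∈ C, v j k)
          - 2 * v i j := by
      rw [hsplit (fun a => ∑ b ∈ C, v a b)]
      have hrows : ∑ a ∈ C', ∑ b ∈ C, v a b
          = ∑ a ∈ C', (v a i + v a j + ∑ b ∈ C', v a b) :=
        Finset.sum_congr rfl fun a _ => hsplit (v a)
      rw [hrows, Finset.sum_add_distrib, Finset.sum_add_distrib, hcol1, hcol2]
      rw [hDi, hDj]
      ring
    -- recurse
    obtain ⟨μ', hm', hw'⟩ := ih (m+1) (by omega) C' hC'card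
    have hpairne : ({i, j} : Finset α) ≠ ⊥ := by
      simp [Finset.bot_eq_empty]
    have hdisj : Disjoint C' ({i,j} : Finset α) := by
      rw [Finset.disjoint_insert_right, Finset.disjoint_singleton_right]
      exact ⟨hiC', hjC'⟩
    have hsupC : C' ⊔ ({i,j} : Finset α) = C := by
      rw [Finset.sup_eq_union, hCeq]
      ext x; simp
    refine ⟨μ'.extend hpairne hdisj hsupC, ?_, ?_⟩
    · intro q hq
      rw [Finpartition.extend_parts, Finset.mem_insert] at hq
      rcases hq with rfl | hq
      · exact le_of_eq (Finset.card_pair hij)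
      · exact hm' q hq
    · have hnotmem : ({i,j} : Finset α) ∉ μ'.parts := by
        intro h
        exact hiC' (μ'.le h (Finset.mem_insert_self i {j}))
      have hps : partSW v (μ'.extend hpairne hdisj hsupC) = v i j + partSW v μ' := by
        rw [partSW, Finpartition.extend_parts, Finset.sum_insert hnotmem,
          coalSW_pair v hsymm hij]
        rfl
      rw [hps]
      -- final arithmetic
      have hNpos2 : (0:ℝ) < 2 * ((m+3:ℕ):ℝ) := by positivity
      rw [div_le_iff₀ hNpos2]
      have e1 : ((∑ k ∈ C, v i k) + (∑ k ∈ C, v j k) - (((m+3:ℕ):ℝ)-1) * v i j)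
          * ((m+3:ℕ):ℝ) ≤ (∑ a ∈ C, ∑ b ∈ C, v a b) := by
        rw [← le_div_iff₀ hNpos]
        linarith [hple]
      have hpos3 : (0:ℝ) < 2 * ((m+1:ℕ):ℝ) := by positivity
      have e2 : (∑ a ∈ C', ∑ b ∈ C', v a b) ≤ 2 * ((m+1:ℕ):ℝ) * partSW v μ' := by
        have := (div_le_iff₀ hpos3).mp hw'
        linarith
      push_cast at e1 e2 hTdec ⊢
      nlinarith [mul_le_mul_of_nonneg_left e2 (show (0:ℝ) ≤ (m:ℝ)+3 by positivity),
        e1, hTdec]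

/-- For a nonempty finite set `C` with a symmetric valuation `v`, there is a matching
`μ` of `C` whose social welfare is at least the weight of the uniform fractional
matching: `(1/|C|)·Σ_{{i,j}⊆C, i≠j} v i j ≤ SW(μ)`.  (The sum over unordered pairs of
distinct elements is written as half the sum over ordered pairs `C.offDiag`, which is
the same for a symmetric valuation.) -/
theorem stmt1 {α : Type*} [DecidableEq α] (C : Finset α) (hC : C.Nonempty)
    (v : α → α → ℝ) (hsymm : ∀ i j, v i j = v j i) (hdiag : ∀ i, v i i = 0) :
    ∃ μ : Finpartition C, IsMatching μ ∧
      (1 / (C.card : ℝ)) * ((∑ p ∈ C.offDiag, v p.1 p.2) / 2) ≤ partSW v μ := by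
  obtain ⟨μ, hm, hle⟩ := key v hsymm hdiag C.card C rfl
  refine ⟨μ, hm, ?_⟩
  have hod : ∑ p ∈ C.offDiag, v p.1 p.2 = ∑ i ∈ C, ∑ j ∈ C, v i j := by
    rw [sum_offDiag_eq]
    exact Finset.sum_congr rfl fun i hi => by
      rw [Finset.sum_erase_eq_sub hi, hdiag i, sub_zero]
  have heq : (1 / (C.card : ℝ)) * ((∑ i ∈ C, ∑ j ∈ C, v i j) / 2)
      = (∑ i ∈ C, ∑ j ∈ C, v i j) / (2 * (C.card : ℝ)) := by
    ring
  rw [hod, heq]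
  exact hle
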